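/- arXiv:0911.1117 — 3 statements merged into one kernel-verified Lean document; each statement's English description precedes it below -/
import Mathlib

section
/- Let X = (X_n)_{n∈ℤ^d} be a weakly stationary centered random field whose covariance function satisfies |r^X(k)| ≤ ρ(k) for all k, with Σ_{k∈ℤ^d} ρ(k) < ∞. Let p_N, q_N be positive integers, k_N = ⌊(2N+1)/(p_N+q_N)⌋, and let Δ_N ⊆ [−N,N]^d be the union of the k_N^d Bernshtein cubes of side p_N+1 built from p_N, q_N. Then for any A ⊆ ℤ^d, E[S_N(A ∩ Δ_N^c, X)²] ≤ C·((2N+1)^d − k_N^d (p_N+1)^d)/(2N+1)^d, where C = Σ_{k∈ℤ^d} ρ(k) and Δ_N^c is the complement of Δ_N in ℤ^d. -/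
open MeasureTheory ProbabilityTheory Filter
open scoped ENNReal NNReal

noncomputable section

/-- The discrete cube `[-N,N]^d ⊆ ℤ^d` as a finset. -/
def intCube (d N : ℕ) : Finset (Fin d → ℤ) :=
  Fintype.piFinset fun _ => Finset.Icc (-(N : ℤ)) (N : ℤ)

open Classical in
/-- `A_N = A ∩ [-N,N]^d` as a finset. -/
def restr (d : ℕ) (A : Set (Fin d → ℤ)) (N : ℕ) : Finset (Fin d → ℤ) :=
  (intCube d N).filter fun n => n ∈ A

/-- The normalized partial sum `S_N(A,X) = (2N+1)^{-d/2} ∑_{n ∈ A_N} X_n`. -/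
def SN {Ω : Type*} (d N : ℕ) (A : Set (Fin d → ℤ)) (X : (Fin d → ℤ) → Ω → ℝ)
    (ω : Ω) : ℝ :=
  (Real.sqrt ((2 * N + 1) ^ d))⁻¹ * ∑ n ∈ restr d A N, X n ω

/-- `H_N(k;A) = card(A_N ∩ (k + A_N)) / (2N+1)^d`. -/
def HN (d : ℕ) (A : Set (Fin d → ℤ)) (N : ℕ) (k : Fin d → ℤ) : ℝ :=
  ((restr d A N ∩ (restr d A N).image (k + ·)).card : ℝ) / (2 * N + 1 : ℝ) ^ d

/-- The sup-norm `‖k‖ = max_i |k_i|` on `ℤ^d`, as a natural number. -/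
def supNormZ {d : ℕ} (k : Fin d → ℤ) : ℕ :=
  Finset.univ.sup fun i => (k i).natAbs

/-- `dist(A,B) ≥ r` in the sup-norm. -/
def setDistGe {d : ℕ} (A B : Set (Fin d → ℤ)) (r : ℝ) : Prop :=
  ∀ a ∈ A, ∀ b ∈ B, r ≤ (supNormZ (a - b) : ℝ)

/-- `A` is asymptotically measurable with limit function `Hlim`. -/
def IsAM (d : ℕ) (A : Set (Fin d → ℤ)) (Hlim : (Fin d → ℤ) → ℝ) : Prop :=
  ∀ k, Tendsto (fun N => HN d A N k) atTop (nhds (Hlim k)) ∧ 0 < Hlim k ∧ Hlim k < 1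

/-- The truncation of the field `X` at level `J`:
`X^J_n = X_n·1_{|X_n|≤J} − E[X_n·1_{|X_n|≤J}]`. -/
def truncF {Ω : Type*} [MeasureSpace Ω] {d : ℕ} (X : (Fin d → ℤ) → Ω → ℝ) (J : ℝ)
    (n : Fin d → ℤ) (ω : Ω) : ℝ :=
  (if |X n ω| ≤ J then X n ω else 0) - ∫ ω', if |X n ω'| ≤ J then X n ω' else 0

/-- The covariance function `r^X(k) = E[X_0 X_k]`. -/
def covF {Ω : Type*} [MeasureSpace Ω] {d : ℕ} (X : (Fin d → ℤ) → Ω → ℝ)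
    (k : Fin d → ℤ) : ℝ :=
  ∫ ω, X 0 ω * X k ω

/-- Strict stationarity of a random field: for every `k` the shifted family has the
same joint distribution as the original one. -/
def StrictStat {Ω : Type*} [MeasureSpace Ω] {d : ℕ} (X : (Fin d → ℤ) → Ω → ℝ) : Prop :=
  ∀ k : Fin d → ℤ,
    Measure.map (fun ω (n : Fin d → ℤ) => X (n + k) ω) (ℙ : Measure Ω)
      = Measure.map (fun ω (n : Fin d → ℤ) => X n ω) (ℙ : Measure Ω)

/-- `m`-dependence: families indexed by finite sets at sup-norm distance `> m`
are independent. -/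
def MDep {Ω : Type*} [MeasureSpace Ω] {d : ℕ} (m : ℕ) (X : (Fin d → ℤ) → Ω → ℝ) : Prop :=
  ∀ S T : Finset (Fin d → ℤ),
    (∀ s ∈ S, ∀ t ∈ T, (m : ℝ) < (supNormZ (s - t) : ℝ)) →
      IndepFun (fun ω (s : S) => X s.1 ω) (fun ω (t : T) => X t.1 ω) ℙ

/-- Convergence in distribution to a centered Gaussian with variance `v`. -/
def WeakToGaussian {Ω : Type*} [MeasureSpace Ω] (Y : ℕ → Ω → ℝ) (v : ℝ≥0) : Prop :=
  ∀ f : BoundedContinuousFunction ℝ ℝ,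
    Tendsto (fun N => ∫ ω, f (Y N ω)) atTop (nhds (∫ x, f x ∂gaussianReal 0 v))

end


private lemma aux_integrable_mul {Ω : Type*} [MeasureSpace Ω] {f g : Ω → ℝ}
    (hf : MeasureTheory.MemLp f 2 ℙ) (hg : MeasureTheory.MemLp g 2 ℙ) :
    MeasureTheory.Integrable (fun ω => f ω * g ω) ℙ := by
  refine ((hf.integrable_sq.add hg.integrable_sq).div_const 2).mono'
    (hf.aestronglyMeasurable.mul hg.aestronglyMeasurable) ?_
  filter_upwards with ω
  simp only [Pi.add_apply]
  rw [Real.norm_eq_abs, abs_mul]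
  nlinarith [sq_nonneg (|f ω| - |g ω|), sq_abs (f ω), sq_abs (g ω),
    abs_nonneg (f ω), abs_nonneg (g ω)]

/-- **The small-blocks remainder is negligible in `L²`.** -/
theorem small_blocks_L2_bound
    {Ω : Type*} [MeasureSpace Ω] [IsProbabilityMeasure (ℙ : Measure Ω)]
    {d : ℕ} (X : (Fin d → ℤ) → Ω → ℝ)
    (hmeas : ∀ n, Measurable (X n))
    (hcent : ∀ n, ∫ ω, X n ω = 0)
    (hL2 : ∀ n, MemLp (X n) 2 ℙ)
    (hstat : ∀ n k : Fin d → ℤ, ∫ ω, X n ω * X (n + k) ω = covF X k)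
    (ρ : (Fin d → ℤ) → ℝ) (hρ : ∀ k, |covF X k| ≤ ρ k) (hρsum : Summable ρ)
    (p q N : ℕ) (hp : 0 < p) (hq : 0 < q)
    (kN : ℕ) (hkN : kN = (2 * N + 1) / (p + q))
    (Δ : Finset (Fin d → ℤ))
    (hΔ : Δ = (Fintype.piFinset fun _ : Fin d => Finset.range kN).biUnion fun j =>
      Fintype.piFinset fun i =>
        Finset.Icc (-(N : ℤ) + (j i : ℤ) * ((p : ℤ) + q))
          (-(N : ℤ) + (j i : ℤ) * ((p : ℤ) + q) + p))
    (A : Set (Fin d → ℤ)) :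
    ∫ ω, (SN d N (A ∩ (↑Δ)ᶜ) X ω) ^ 2
      ≤ (∑' k : Fin d → ℤ, ρ k)
        * (((2 * N + 1 : ℝ) ^ d - (kN : ℝ) ^ d * ((p : ℝ) + 1) ^ d)
            / (2 * N + 1 : ℝ) ^ d) := by
  classical
  set C := ∑' k : Fin d → ℤ, ρ k with hC
  have hρnn : ∀ k, 0 ≤ ρ k := fun k => (abs_nonneg _).trans (hρ k)
  have hCnn : 0 ≤ C := tsum_nonneg hρnn
  set B := restr d (A ∩ (↑Δ)ᶜ) N with hB
  have hIcc : (Finset.Icc (-(N : ℤ)) (N : ℤ)).card = 2 * N + 1 := by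
    rw [Int.card_Icc]; omega
  have hcube : (intCube d N).card = (2 * N + 1) ^ d := by
    rw [intCube, Fintype.card_piFinset]
    simp [hIcc]
  have hkNle : kN * (p + q) ≤ 2 * N + 1 := hkN ▸ Nat.div_mul_le_self _ _
  have hq1 : (1 : ℤ) ≤ (q : ℤ) := by exact_mod_cast hq
  have hΔsub : Δ ⊆ intCube d N := by
    rw [hΔ]
    intro x hx
    simp only [Finset.mem_biUnion, Fintype.mem_piFinset] at hx
    obtain ⟨j, hj, hx⟩ := hx
    rw [intCube, Fintype.mem_piFinset]
    intro i
    have hji : j i < kN := by have := hj i; simpa using this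
    have hxi := hx i
    simp only [Finset.mem_Icc] at hxi ⊢
    have h2 : ((j i : ℤ) + 1) * ((p : ℤ) + (q : ℤ)) ≤ 2 * (N : ℤ) + 1 := by
      have : (j i + 1) * (p + q) ≤ 2 * N + 1 :=
        le_trans (Nat.mul_le_mul_right _ hji) hkNle
      exact_mod_cast this
    have h0 : (0 : ℤ) ≤ (j i : ℤ) * ((p : ℤ) + q) := by positivity
    constructor
    · linarith [hxi.1]
    · nlinarith [hxi.2]
  have hdisj : ∀ j1 ∈ (Fintype.piFinset fun _ : Fin d => Finset.range kN),
      ∀ j2 ∈ (Fintype.piFinset fun _ : Fin d => Finset.range kN), j1 ≠ j2 →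
      Disjoint
        (Fintype.piFinset fun i =>
          Finset.Icc (-(N : ℤ) + (j1 i : ℤ) * ((p : ℤ) + q))
            (-(N : ℤ) + (j1 i : ℤ) * ((p : ℤ) + q) + p))
        (Fintype.piFinset fun i =>
          Finset.Icc (-(N : ℤ) + (j2 i : ℤ) * ((p : ℤ) + q))
            (-(N : ℤ) + (j2 i : ℤ) * ((p : ℤ) + q) + p)) := by
    intro j1 _ j2 _ hne
    obtain ⟨i, hi⟩ := Function.ne_iff.mp hne
    rw [Finset.disjoint_left]
    intro x hx1 hx2
    rw [Fintype.mem_piFinset] at hx1 hx2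
    have a1 := hx1 i; have a2 := hx2 i
    simp only [Finset.mem_Icc] at a1 a2
    have hne' : (j1 i : ℤ) ≠ (j2 i : ℤ) := by exact_mod_cast hi
    have hpq : (0 : ℤ) ≤ (p : ℤ) + q := by positivity
    rcases lt_or_gt_of_ne hne' with h | h
    · have h1 : (j1 i : ℤ) + 1 ≤ j2 i := h
      have := mul_le_mul_of_nonneg_right h1 hpq
      nlinarith [a1.1, a1.2, a2.1, a2.2]
    · have h1 : (j2 i : ℤ) + 1 ≤ j1 i := h
      have := mul_le_mul_of_nonneg_right h1 hpq
      nlinarith [a1.1, a1.2, a2.1, a2.2]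
  have hΔcard : Δ.card = kN ^ d * (p + 1) ^ d := by
    rw [hΔ, Finset.card_biUnion hdisj]
    have hc : ∀ j : Fin d → ℕ,
        (Fintype.piFinset fun i =>
          Finset.Icc (-(N : ℤ) + (j i : ℤ) * ((p : ℤ) + q))
            (-(N : ℤ) + (j i : ℤ) * ((p : ℤ) + q) + p)).card = (p + 1) ^ d := by
      intro j
      rw [Fintype.card_piFinset]
      have : ∀ i : Fin d,
          (Finset.Icc (-(N : ℤ) + (j i : ℤ) * ((p : ℤ) + q))
            (-(N : ℤ) + (j i : ℤ) * ((p : ℤ) + q) + p)).card = p + 1 := by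
        intro i; rw [Int.card_Icc]; omega
      simp [this]
    simp only [hc]
    rw [Finset.sum_const, Fintype.card_piFinset]
    simp [mul_comm]
  have hBsub : B ⊆ intCube d N \ Δ := by
    intro n hn
    rw [hB] at hn
    have hn' : n ∈ intCube d N ∧ n ∈ A ∧ n ∉ Δ := by
      simpa [restr, Set.mem_inter_iff, Set.mem_compl_iff] using hn
    rw [Finset.mem_sdiff]
    exact ⟨hn'.1, hn'.2.2⟩
  have hΔle : Δ.card ≤ (intCube d N).card := Finset.card_le_card hΔsub
  have hcastle : kN ^ d * (p + 1) ^ d ≤ (2 * N + 1) ^ d := by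
    rw [← hΔcard, ← hcube]; exact hΔle
  have hBcard : (B.card : ℝ) ≤ (2 * (N : ℝ) + 1) ^ d - (kN : ℝ) ^ d * ((p : ℝ) + 1) ^ d := by
    have h3 : B.card ≤ (2 * N + 1) ^ d - kN ^ d * (p + 1) ^ d := by
      calc B.card ≤ (intCube d N \ Δ).card := Finset.card_le_card hBsub
        _ = (2 * N + 1) ^ d - kN ^ d * (p + 1) ^ d := by
            rw [Finset.card_sdiff_of_subset hΔsub, hcube, hΔcard]
    have hBR : (B.card : ℝ) ≤ (((2 * N + 1) ^ d - kN ^ d * (p + 1) ^ d : ℕ) : ℝ) :=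
      Nat.cast_le.mpr h3
    rw [Nat.cast_sub hcastle] at hBR
    push_cast at hBR
    convert hBR using 2 <;> push_cast <;> ring
  have hint : ∀ m n : Fin d → ℤ, Integrable (fun ω => X m ω * X n ω) ℙ :=
    fun m n => aux_integrable_mul (hL2 m) (hL2 n)
  have hcov : ∀ m n : Fin d → ℤ, ∫ ω, X m ω * X n ω = covF X (n - m) := by
    intro m n
    have h := hstat m (n - m)
    have he : m + (n - m) = n := by ring
    rwa [he] at h
  have key : ∫ ω, (∑ n ∈ B, X n ω) ^ 2 = ∑ m ∈ B, ∑ n ∈ B, covF X (n - m) := by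
    have hω : ∀ ω, (∑ n ∈ B, X n ω) ^ 2 = ∑ m ∈ B, ∑ n ∈ B, X m ω * X n ω := by
      intro ω; rw [sq, Finset.sum_mul_sum]
    simp_rw [hω]
    rw [integral_finset_sum _ (fun m _ => integrable_finset_sum _ (fun n _ => hint m n))]
    refine Finset.sum_congr rfl fun m _ => ?_
    rw [integral_finset_sum _ (fun n _ => hint m n)]
    exact Finset.sum_congr rfl fun n _ => hcov m n
  have hsum : ∑ m ∈ B, ∑ n ∈ B, covF X (n - m) ≤ (B.card : ℝ) * C := by
    calc ∑ m ∈ B, ∑ n ∈ B, covF X (n - m)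
        ≤ ∑ m ∈ B, ∑ n ∈ B, ρ (n - m) :=
          Finset.sum_le_sum fun m _ => Finset.sum_le_sum fun n _ =>
            (le_abs_self _).trans (hρ _)
      _ ≤ ∑ _m ∈ B, C := by
          refine Finset.sum_le_sum fun m _ => ?_
          have hinj : ∀ x ∈ B, ∀ y ∈ B, x - m = y - m → x = y :=
            fun x _ y _ h => by simpa using sub_left_inj.mp h
          calc ∑ n ∈ B, ρ (n - m)
              = ∑ k ∈ B.image (fun n => n - m), ρ k := (Finset.sum_image hinj).symm
            _ ≤ C := Summable.sum_le_tsum _ (fun k _ => hρnn k) hρsum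
      _ = (B.card : ℝ) * C := by rw [Finset.sum_const, nsmul_eq_mul]
  have hpow : (0 : ℝ) < (2 * (N : ℝ) + 1) ^ d := by positivity
  have hSN : ∀ ω, (SN d N (A ∩ (↑Δ)ᶜ) X ω) ^ 2
      = ((2 * (N : ℝ) + 1) ^ d)⁻¹ * (∑ n ∈ B, X n ω) ^ 2 := by
    intro ω
    rw [SN, mul_pow, inv_pow, Real.sq_sqrt (by positivity)]
  calc ∫ ω, (SN d N (A ∩ (↑Δ)ᶜ) X ω) ^ 2
      = ((2 * (N : ℝ) + 1) ^ d)⁻¹ * ∫ ω, (∑ n ∈ B, X n ω) ^ 2 := by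
        simp_rw [hSN]; rw [integral_const_mul]
    _ = ((2 * (N : ℝ) + 1) ^ d)⁻¹ * (∑ m ∈ B, ∑ n ∈ B, covF X (n - m)) := by rw [key]
    _ ≤ ((2 * (N : ℝ) + 1) ^ d)⁻¹ * ((B.card : ℝ) * C) := by
        exact mul_le_mul_of_nonneg_left hsum (by positivity)
    _ ≤ ((2 * (N : ℝ) + 1) ^ d)⁻¹
          * (((2 * (N : ℝ) + 1) ^ d - (kN : ℝ) ^ d * ((p : ℝ) + 1) ^ d) * C) := by
        exact mul_le_mul_of_nonneg_left (mul_le_mul_of_nonneg_right hBcard hCnn)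
          (by positivity)
    _ = C * (((2 * (N : ℝ) + 1) ^ d - (kN : ℝ) ^ d * ((p : ℝ) + 1) ^ d)
          / (2 * (N : ℝ) + 1) ^ d) := by
        field_simp
end

section
/- Let A ⊆ ℤ^d be asymptotically measurable and let p_N, q_N be nondecreasing sequences of positive integers with q_N → ∞, q_N/p_N → 0 and p_N/N → 0; set k_N = ⌊(2N+1)/(p_N+q_N)⌋ and let Δ_N(1), …, Δ_N(k_N^d) be the Bernshtein cubes of side p_N+1 in [−N,N]^d. Then for every k ∈ ℤ^d: (a) 0 ≤ Σ_{ℓ=1}^{k_N^d} H_N(k; A ∩ Δ_N(ℓ)) ≤ 1 for all N; and (b) Σ_{ℓ=1}^{k_N^d} H_N(k; A ∩ Δ_N(ℓ)) → H(k;A) as N → ∞. -/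
open MeasureTheory ProbabilityTheory Filter
open scoped ENNReal NNReal

lemma rr_tendsto (p q kb : ℕ → ℕ) (hp : ∀ N, 0 < p N) (hq : ∀ N, 0 < q N)
    (hqtop : Tendsto (fun N => (q N : ℝ)) atTop atTop)
    (hqp : Tendsto (fun N => (q N : ℝ) / (p N : ℝ)) atTop (nhds 0))
    (hpN : Tendsto (fun N => (p N : ℝ) / (N : ℝ)) atTop (nhds 0))
    (hkb : ∀ N, kb N = (2 * N + 1) / (p N + q N)) (M : ℕ) :
    Tendsto (fun N => (kb N : ℝ) * ((p N : ℝ) + 1 - 2 * M) / (2 * N + 1)) atTop (nhds 1) := by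
  have hppos : ∀ N, (0:ℝ) < p N := fun N => by exact_mod_cast hp N
  have hpqpos : ∀ N, (0:ℝ) < (p N : ℝ) + q N := fun N => by
    have := hq N; positivity
  have h2N : ∀ N : ℕ, (0:ℝ) < 2 * (N:ℝ) + 1 := fun N => by positivity
  -- eventually q ≤ p
  have hqlep : ∀ᶠ N in atTop, (q N : ℝ) ≤ (p N : ℝ) := by
    filter_upwards [hqp.eventually (gt_mem_nhds (by norm_num : (0:ℝ) < 1))] with N hN
    have := (div_lt_one (hppos N)).mp hN
    linarith
  have hptop : Tendsto (fun N => (p N : ℝ)) atTop atTop :=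
    tendsto_atTop_mono' atTop hqlep hqtop
  -- (p+q)/(2N+1) → 0
  have hPQ0 : Tendsto (fun N => ((p N : ℝ) + q N) / (2 * N + 1)) atTop (nhds 0) := by
    apply squeeze_zero' (by filter_upwards with N; positivity)
      (g := fun N => (p N : ℝ) / (N : ℝ))
    · filter_upwards [eventually_ge_atTop 1, hqlep] with N hN hqp'
      have hN1 : (1:ℝ) ≤ (N:ℝ) := by exact_mod_cast hN
      rw [div_le_div_iff₀ (h2N N) (by linarith)]
      have := hppos N
      nlinarith
    · exact hpN
  -- f → 1
  have hf : Tendsto (fun N => (kb N : ℝ) * ((p N : ℝ) + q N) / (2 * N + 1)) atTop (nhds 1) := by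
    have hub : ∀ N : ℕ, (kb N : ℝ) * ((p N : ℝ) + q N) / (2 * N + 1) ≤ 1 := by
      intro N
      rw [div_le_one (h2N N)]
      have h1 : kb N * (p N + q N) ≤ 2 * N + 1 := by
        rw [hkb]; exact Nat.div_mul_le_self _ _
      calc (kb N : ℝ) * ((p N : ℝ) + q N) = ((kb N * (p N + q N) : ℕ) : ℝ) := by push_cast; ring
        _ ≤ ((2 * N + 1 : ℕ) : ℝ) := by exact_mod_cast h1
        _ = 2 * (N:ℝ) + 1 := by push_cast; ring
    have hlb : ∀ N : ℕ, 1 - ((p N : ℝ) + q N) / (2 * N + 1)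
        ≤ (kb N : ℝ) * ((p N : ℝ) + q N) / (2 * N + 1) := by
      intro N
      have h1 : (p N + q N) * kb N + (2 * N + 1) % (p N + q N) = 2 * N + 1 := by
        rw [hkb]; exact Nat.div_add_mod _ _
      have h2 : (2 * N + 1) % (p N + q N) < p N + q N :=
        Nat.mod_lt _ (by have := hp N; omega)
      have h1' : ((p N : ℝ) + q N) * kb N + ((2 * N + 1) % (p N + q N) : ℕ) = 2 * (N:ℝ) + 1 := by
        exact_mod_cast h1
      have h2' : (((2 * N + 1) % (p N + q N) : ℕ) : ℝ) < (p N : ℝ) + q N := by exact_mod_cast h2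
      rw [one_sub_div (h2N N).ne', div_le_div_iff₀ (h2N N) (h2N N)]
      nlinarith
    refine tendsto_of_tendsto_of_tendsto_of_le_of_le'
      (g := fun N => 1 - ((p N : ℝ) + q N) / (2 * N + 1)) (h := fun _ => 1)
      ?_ tendsto_const_nhds (Eventually.of_forall hlb) (Eventually.of_forall hub)
    simpa using (tendsto_const_nhds (x := (1:ℝ))).sub hPQ0
  -- g → 1
  have hg : Tendsto (fun N => ((p N : ℝ) + 1 - 2 * M) / ((p N : ℝ) + q N)) atTop (nhds 1) := by
    have hub : ∀ N : ℕ, ((p N : ℝ) + 1 - 2 * M) / ((p N : ℝ) + q N) ≤ 1 := by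
      intro N
      rw [div_le_one (hpqpos N)]
      have h1 : (1:ℝ) ≤ q N := by exact_mod_cast hq N
      have : (0:ℝ) ≤ (M:ℝ) := by positivity
      linarith
    have hlb : ∀ᶠ N in atTop, 1 - ((q N : ℝ) + 2 * M) / (p N : ℝ)
        ≤ ((p N : ℝ) + 1 - 2 * M) / ((p N : ℝ) + q N) := by
      filter_upwards with N
      have h1 : (1:ℝ) ≤ q N := by exact_mod_cast hq N
      have hM0 : (0:ℝ) ≤ (M:ℝ) := by positivity
      rw [one_sub_div (hppos N).ne', div_le_div_iff₀ (hppos N) (hpqpos N)]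
      nlinarith [sq_nonneg ((q N : ℝ))]
    refine tendsto_of_tendsto_of_tendsto_of_le_of_le'
      (g := fun N => 1 - ((q N : ℝ) + 2 * M) / (p N : ℝ)) (h := fun _ => 1)
      ?_ tendsto_const_nhds hlb (Eventually.of_forall hub)
    have h2M : Tendsto (fun N => (2 * (M:ℝ)) / (p N : ℝ)) atTop (nhds 0) :=
      Tendsto.div_atTop tendsto_const_nhds hptop
    have : Tendsto (fun N => ((q N : ℝ) + 2 * M) / (p N : ℝ)) atTop (nhds 0) := by
      have := hqp.add h2M
      simpa [add_div] using this
    simpa using (tendsto_const_nhds (x := (1:ℝ))).sub this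
  -- combine
  have heq : ∀ N : ℕ, ((kb N : ℝ) * ((p N : ℝ) + q N) / (2 * N + 1)) *
      (((p N : ℝ) + 1 - 2 * M) / ((p N : ℝ) + q N))
      = (kb N : ℝ) * ((p N : ℝ) + 1 - 2 * M) / (2 * N + 1) := by
    intro N
    rw [div_mul_div_comm,
      show (kb N:ℝ) * ((p N:ℝ) + q N) * ((p N:ℝ) + 1 - 2 * M)
        = ((p N:ℝ) + q N) * ((kb N:ℝ) * ((p N:ℝ) + 1 - 2 * M)) from by ring,
      show (2 * (N:ℝ) + 1) * ((p N:ℝ) + q N) = ((p N:ℝ) + q N) * (2 * (N:ℝ) + 1) from by ring,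
      mul_div_mul_left _ _ (hpqpos N).ne']
  have := hf.mul hg
  rw [one_mul] at this
  exact this.congr heq


lemma restr_inter (d : ℕ) (A : Set (Fin d → ℤ)) (N : ℕ) (s : Finset (Fin d → ℤ)) :
    restr d (A ∩ ↑s) N = restr d A N ∩ s := by
  ext n
  simp only [restr, Finset.mem_filter, Finset.mem_inter, Set.mem_inter_iff, Finset.mem_coe]
  tauto

lemma card_intCube (d N : ℕ) : (intCube d N).card = (2 * N + 1) ^ d := by
  have h : ((N : ℤ) + 1 + (N : ℤ)).toNat = 2 * N + 1 := by omega
  simp [intCube, Fintype.card_piFinset, Int.card_Icc, h]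

lemma restr_subset (d : ℕ) (A : Set (Fin d → ℤ)) (N : ℕ) : restr d A N ⊆ intCube d N := by
  classical
  rw [restr]
  intro x hx
  exact (Finset.mem_filter.mp hx).1

lemma HN_nonneg (d : ℕ) (A : Set (Fin d → ℤ)) (N : ℕ) (k : Fin d → ℤ) : 0 ≤ HN d A N k := by
  rw [HN]; positivity

lemma HN_le_one (d : ℕ) (A : Set (Fin d → ℤ)) (N : ℕ) (k : Fin d → ℤ) : HN d A N k ≤ 1 := by
  rw [HN, div_le_one (by positivity)]
  calc ((restr d A N ∩ (restr d A N).image (k + ·)).card : ℝ)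
      ≤ ((intCube d N).card : ℝ) := by
        exact_mod_cast Finset.card_le_card
          (Finset.inter_subset_left.trans (restr_subset d A N))
    _ = (2 * (N:ℝ) + 1) ^ d := by rw [card_intCube]; push_cast; ring

lemma delta_disjoint {d : ℕ} (N P Q : ℕ) (hQ : 0 < Q)
    (Δ : (Fin d → ℕ) → Finset (Fin d → ℤ))
    (hΔ : ∀ j, Δ j = Fintype.piFinset fun i =>
      Finset.Icc (-(N : ℤ) + (j i : ℤ) * ((P : ℤ) + Q))
        (-(N : ℤ) + (j i : ℤ) * ((P : ℤ) + Q) + P))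
    (j j' : Fin d → ℕ) (hne : j ≠ j') : Disjoint (Δ j) (Δ j') := by
  rw [Finset.disjoint_left]
  intro x hx hx'
  obtain ⟨i, hi⟩ := Function.ne_iff.mp hne
  rw [hΔ j, Fintype.mem_piFinset] at hx
  rw [hΔ j', Fintype.mem_piFinset] at hx'
  have h1 := Finset.mem_Icc.mp (hx i)
  have h2 := Finset.mem_Icc.mp (hx' i)
  have hQ' : (1:ℤ) ≤ (Q:ℤ) := by exact_mod_cast hQ
  have hP0 : (0:ℤ) ≤ (P:ℤ) := Int.natCast_nonneg P
  rcases lt_or_gt_of_ne hi with h | h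
  · have hh : ((j i : ℤ) + 1) * ((P:ℤ) + Q) ≤ (j' i : ℤ) * ((P:ℤ) + Q) := by
      apply mul_le_mul_of_nonneg_right _ (by positivity)
      exact_mod_cast h
    nlinarith [h1.1, h1.2, h2.1, h2.2]
  · have hh : ((j' i : ℤ) + 1) * ((P:ℤ) + Q) ≤ (j i : ℤ) * ((P:ℤ) + Q) := by
      apply mul_le_mul_of_nonneg_right _ (by positivity)
      exact_mod_cast h
    nlinarith [h1.1, h1.2, h2.1, h2.2]

lemma delta_subset_cube {d : ℕ} (N P Q K : ℕ) (hQ : 0 < Q) (hK : K * (P + Q) ≤ 2 * N + 1)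
    (Δ : (Fin d → ℕ) → Finset (Fin d → ℤ))
    (hΔ : ∀ j, Δ j = Fintype.piFinset fun i =>
      Finset.Icc (-(N : ℤ) + (j i : ℤ) * ((P : ℤ) + Q))
        (-(N : ℤ) + (j i : ℤ) * ((P : ℤ) + Q) + P))
    (j : Fin d → ℕ) (hj : ∀ i, j i < K) : Δ j ⊆ intCube d N := by
  intro x hx
  rw [hΔ, Fintype.mem_piFinset] at hx
  rw [intCube, Fintype.mem_piFinset]
  intro i
  rw [Finset.mem_Icc]
  have h1 := Finset.mem_Icc.mp (hx i)
  have hQ' : (1:ℤ) ≤ (Q:ℤ) := by exact_mod_cast hQ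
  have hprod : ((j i : ℤ) + 1) * ((P:ℤ) + Q) ≤ 2 * N + 1 := by
    calc ((j i : ℤ) + 1) * ((P:ℤ) + Q) = (((j i + 1) * (P + Q) : ℕ) : ℤ) := by push_cast; ring
      _ ≤ ((K * (P + Q) : ℕ) : ℤ) := by
          exact_mod_cast Nat.mul_le_mul_right _ (hj i)
      _ ≤ ((2 * N + 1 : ℕ) : ℤ) := by exact_mod_cast hK
      _ = 2 * (N:ℤ) + 1 := by push_cast; ring
  have hji0 : (0:ℤ) ≤ (j i : ℤ) * ((P:ℤ) + Q) := by positivity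
  constructor
  · linarith [h1.1]
  · nlinarith [h1.2]

lemma blocksum_le {d : ℕ} (A : Set (Fin d → ℤ)) (κ : Fin d → ℤ) (N P Q K : ℕ) (hQ : 0 < Q)
    (Δ : (Fin d → ℕ) → Finset (Fin d → ℤ))
    (hΔ : ∀ j, Δ j = Fintype.piFinset fun i =>
      Finset.Icc (-(N : ℤ) + (j i : ℤ) * ((P : ℤ) + Q))
        (-(N : ℤ) + (j i : ℤ) * ((P : ℤ) + Q) + P)) :
    (∑ j ∈ Fintype.piFinset fun _ : Fin d => Finset.range K, HN d (A ∩ ↑(Δ j)) N κ)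
      ≤ HN d A N κ := by
  classical
  set R := restr d A N with hR
  set Cc : (Fin d → ℕ) → Finset (Fin d → ℤ) :=
    fun j => (R ∩ Δ j) ∩ ((R ∩ Δ j).image (κ + ·)) with hCc
  set s := Fintype.piFinset fun _ : Fin d => Finset.range K with hs
  have hrw : ∀ j ∈ s, HN d (A ∩ ↑(Δ j)) N κ = ((Cc j).card : ℝ) / (2 * (N:ℝ) + 1) ^ d := by
    intro j _
    unfold HN
    rw [restr_inter]
  have hCcΔ : ∀ j, Cc j ⊆ Δ j := fun j =>
    Finset.inter_subset_left.trans Finset.inter_subset_right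
  have hdisjCc : ∀ j ∈ s, ∀ j' ∈ s, j ≠ j' → Disjoint (Cc j) (Cc j') := by
    intro j _ j' _ h
    exact (delta_disjoint N P Q hQ Δ hΔ j j' h).mono (hCcΔ j) (hCcΔ j')
  have key : (∑ j ∈ s, (Cc j).card) ≤ (R ∩ R.image (κ + ·)).card := by
    rw [← Finset.card_biUnion hdisjCc]
    apply Finset.card_le_card
    intro x hx
    rw [Finset.mem_biUnion] at hx
    obtain ⟨j, _, hxj⟩ := hx
    have h1 := Finset.mem_inter.mp hxj
    exact Finset.mem_inter.mpr ⟨(Finset.mem_inter.mp h1.1).1,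
      Finset.image_subset_image Finset.inter_subset_left h1.2⟩
  rw [Finset.sum_congr rfl hrw, ← Finset.sum_div]
  unfold HN
  gcongr
  exact_mod_cast key

noncomputable def coreCube (d N P Q M : ℕ) (j : Fin d → ℕ) : Finset (Fin d → ℤ) :=
  Fintype.piFinset fun i =>
    Finset.Icc (-(N : ℤ) + (j i : ℤ) * ((P : ℤ) + Q) + M)
      (-(N : ℤ) + (j i : ℤ) * ((P : ℤ) + Q) + P - M)

lemma blocksum_lower {d : ℕ} (A : Set (Fin d → ℤ)) (κ : Fin d → ℤ) (N P Q K : ℕ)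
    (hQ : 0 < Q) (hK : K * (P + Q) ≤ 2 * N + 1) (hM : 2 * supNormZ κ ≤ P)
    (Δ : (Fin d → ℕ) → Finset (Fin d → ℤ))
    (hΔ : ∀ j, Δ j = Fintype.piFinset fun i =>
      Finset.Icc (-(N : ℤ) + (j i : ℤ) * ((P : ℤ) + Q))
        (-(N : ℤ) + (j i : ℤ) * ((P : ℤ) + Q) + P)) :
    HN d A N κ + ((K:ℝ) * ((P:ℝ) + 1 - 2 * supNormZ κ)) ^ d / (2 * (N:ℝ) + 1) ^ d
      ≤ (∑ j ∈ Fintype.piFinset fun _ : Fin d => Finset.range K,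
          HN d (A ∩ ↑(Δ j)) N κ) + 1 := by
  classical
  set M := supNormZ κ with hMdef
  have hMabs : ∀ i, |κ i| ≤ (M : ℤ) := by
    intro i
    have h := Finset.le_sup (f := fun i => (κ i).natAbs) (Finset.mem_univ i)
    rw [Int.abs_eq_natAbs]
    exact_mod_cast h
  have hM0 : (0:ℤ) ≤ (M:ℤ) := Int.natCast_nonneg M
  set R := restr d A N with hR
  set Cc : (Fin d → ℕ) → Finset (Fin d → ℤ) :=
    fun j => (R ∩ Δ j) ∩ ((R ∩ Δ j).image (κ + ·)) with hCc
  set s := Fintype.piFinset fun _ : Fin d => Finset.range K with hs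
  set E : (Fin d → ℕ) → Finset (Fin d → ℤ) := coreCube d N P Q M with hE
  set Cbig := R ∩ R.image (κ + ·) with hCbig
  -- basic inclusions
  have hEΔ : ∀ j, E j ⊆ Δ j := by
    intro j x hx
    rw [hE, coreCube, Fintype.mem_piFinset] at hx
    rw [hΔ, Fintype.mem_piFinset]
    intro i
    have h1 := Finset.mem_Icc.mp (hx i)
    rw [Finset.mem_Icc]
    constructor <;> linarith [h1.1, h1.2]
  have hΔcube : ∀ j ∈ s, Δ j ⊆ intCube d N := by
    intro j hj
    apply delta_subset_cube N P Q K hQ hK Δ hΔ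
    intro i
    exact Finset.mem_range.mp (Fintype.mem_piFinset.mp hj i)
  -- cardinalities
  have hIcc : ∀ a : ℤ, (Finset.Icc (a + M) (a + P - M)).card = P + 1 - 2 * M := by
    intro a
    rw [Int.card_Icc]
    have h : a + (P:ℤ) - M + 1 - (a + M) = (P:ℤ) - 2 * M + 1 := by ring
    rw [h]
    omega
  have hEcard : ∀ j, (E j).card = (P + 1 - 2 * M) ^ d := by
    intro j
    rw [hE, coreCube, Fintype.card_piFinset]
    simp [hIcc]
  have hscard : s.card = K ^ d := by
    rw [hs, Fintype.card_piFinset]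
    simp
  have hEdisj : ∀ j ∈ s, ∀ j' ∈ s, j ≠ j' → Disjoint (E j) (E j') := by
    intro j _ j' _ h
    exact (delta_disjoint N P Q hQ Δ hΔ j j' h).mono (hEΔ j) (hEΔ j')
  have hUcard : (s.biUnion E).card = K ^ d * (P + 1 - 2 * M) ^ d := by
    rw [Finset.card_biUnion hEdisj]
    rw [Finset.sum_congr rfl fun j _ => hEcard j, Finset.sum_const, hscard, smul_eq_mul]
  -- Cc disjointness and sum
  have hCcΔ : ∀ j, Cc j ⊆ Δ j := fun j =>
    Finset.inter_subset_left.trans Finset.inter_subset_right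
  have hdisjCc : ∀ j ∈ s, ∀ j' ∈ s, j ≠ j' → Disjoint (Cc j) (Cc j') := by
    intro j _ j' _ h
    exact (delta_disjoint N P Q hQ Δ hΔ j j' h).mono (hCcΔ j) (hCcΔ j')
  -- the key inclusion
  have hkey : Cbig ∩ s.biUnion E ⊆ s.biUnion Cc := by
    intro x hx
    obtain ⟨hxC, hxU⟩ := Finset.mem_inter.mp hx
    rw [Finset.mem_biUnion] at hxU ⊢
    obtain ⟨j, hjs, hxE⟩ := hxU
    refine ⟨j, hjs, ?_⟩
    obtain ⟨hxR, hxim⟩ := Finset.mem_inter.mp hxC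
    obtain ⟨y, hyR, hxy⟩ := Finset.mem_image.mp hxim
    have hxΔ : x ∈ Δ j := hEΔ j hxE
    have hyΔ : y ∈ Δ j := by
      rw [hΔ, Fintype.mem_piFinset]
      intro i
      rw [hE, coreCube, Fintype.mem_piFinset] at hxE
      have hx_i := Finset.mem_Icc.mp (hxE i)
      have hyi : y i = x i - κ i := by rw [← hxy]; simp
      have habs := abs_le.mp (hMabs i)
      rw [Finset.mem_Icc, hyi]
      constructor <;> linarith [hx_i.1, hx_i.2, habs.1, habs.2]
    exact Finset.mem_inter.mpr ⟨Finset.mem_inter.mpr ⟨hxR, hxΔ⟩,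
      Finset.mem_image.mpr ⟨y, Finset.mem_inter.mpr ⟨hyR, hyΔ⟩, hxy⟩⟩
  -- the nat inequality
  have hnat : Cbig.card + K ^ d * (P + 1 - 2 * M) ^ d
      ≤ (∑ j ∈ s, (Cc j).card) + (2 * N + 1) ^ d := by
    have h2 : (Cbig ∪ s.biUnion E).card ≤ (2 * N + 1) ^ d := by
      rw [← card_intCube d N]
      apply Finset.card_le_card
      apply Finset.union_subset
      · exact Finset.inter_subset_left.trans (restr_subset d A N)
      · exact Finset.biUnion_subset.mpr fun j hj => (hEΔ j).trans (hΔcube j hj)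
    have h3 : (Cbig ∩ s.biUnion E).card ≤ ∑ j ∈ s, (Cc j).card := by
      rw [← Finset.card_biUnion hdisjCc]
      exact Finset.card_le_card hkey
    calc Cbig.card + K ^ d * (P + 1 - 2 * M) ^ d
        = Cbig.card + (s.biUnion E).card := by rw [hUcard]
      _ = (Cbig ∩ s.biUnion E).card + (Cbig ∪ s.biUnion E).card :=
          (Finset.card_inter_add_card_union _ _).symm
      _ ≤ _ := Nat.add_le_add h3 h2
  -- pass to the reals
  have hrw : ∀ j ∈ s, HN d (A ∩ ↑(Δ j)) N κ = ((Cc j).card : ℝ) / (2 * (N:ℝ) + 1) ^ d := by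
    intro j _
    unfold HN
    rw [restr_inter]
  have hcast : ((P + 1 - 2 * M : ℕ) : ℝ) = (P:ℝ) + 1 - 2 * M := by
    have h2 : 2 * M ≤ P + 1 := by omega
    push_cast [h2]
    ring
  have hT : (0:ℝ) < (2 * (N:ℝ) + 1) ^ d := by positivity
  have hr : (Cbig.card : ℝ) + (K:ℝ) ^ d * ((P:ℝ) + 1 - 2 * M) ^ d
      ≤ (∑ j ∈ s, ((Cc j).card : ℝ)) + (2 * (N:ℝ) + 1) ^ d := by
    have := hnat
    have hcast2 : (((∑ j ∈ s, (Cc j).card) + (2 * N + 1) ^ d : ℕ) : ℝ)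
        = (∑ j ∈ s, ((Cc j).card : ℝ)) + (2 * (N:ℝ) + 1) ^ d := by push_cast; ring
    have hcast1 : ((Cbig.card + K ^ d * (P + 1 - 2 * M) ^ d : ℕ) : ℝ)
        = (Cbig.card : ℝ) + (K:ℝ) ^ d * ((P:ℝ) + 1 - 2 * M) ^ d := by
      push_cast [hcast]
      ring
    rw [← hcast1, ← hcast2]
    exact_mod_cast this
  rw [Finset.sum_congr rfl hrw, ← Finset.sum_div]
  unfold HN
  rw [mul_pow]
  rw [← hR, ← hCbig, div_add_one hT.ne', ← add_div]
  exact (div_le_div_iff_of_pos_right hT).mpr hr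


/-- **Convergence of the block sums of `H_N` for an AM set.** -/
theorem HN_block_sums_converge
    {d : ℕ} (A : Set (Fin d → ℤ)) (Hlim : (Fin d → ℤ) → ℝ) (hA : IsAM d A Hlim)
    (p q : ℕ → ℕ) (hpmono : Monotone p) (hqmono : Monotone q)
    (hp : ∀ N, 0 < p N) (hq : ∀ N, 0 < q N)
    (hqtop : Tendsto (fun N => (q N : ℝ)) atTop atTop)
    (hqp : Tendsto (fun N => (q N : ℝ) / (p N : ℝ)) atTop (nhds 0))
    (hpN : Tendsto (fun N => (p N : ℝ) / (N : ℝ)) atTop (nhds 0))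
    (kb : ℕ → ℕ) (hkb : ∀ N, kb N = (2 * N + 1) / (p N + q N))
    (Δ : (N : ℕ) → (Fin d → ℕ) → Finset (Fin d → ℤ))
    (hΔ : ∀ N j, Δ N j = Fintype.piFinset fun i =>
      Finset.Icc (-(N : ℤ) + (j i : ℤ) * ((p N : ℤ) + q N))
        (-(N : ℤ) + (j i : ℤ) * ((p N : ℤ) + q N) + p N))
    (κ : Fin d → ℤ) :
    (∀ N : ℕ,
      0 ≤ (∑ j ∈ Fintype.piFinset fun _ : Fin d => Finset.range (kb N),
            HN d (A ∩ ↑(Δ N j)) N κ) ∧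
      (∑ j ∈ Fintype.piFinset fun _ : Fin d => Finset.range (kb N),
            HN d (A ∩ ↑(Δ N j)) N κ) ≤ 1) ∧
    Tendsto
      (fun N => ∑ j ∈ Fintype.piFinset fun _ : Fin d => Finset.range (kb N),
        HN d (A ∩ ↑(Δ N j)) N κ)
      atTop (nhds (Hlim κ)) := by

  classical
  have hkmul : ∀ N, kb N * (p N + q N) ≤ 2 * N + 1 := fun N => by
    rw [hkb]; exact Nat.div_mul_le_self _ _
  have hle : ∀ N, (∑ j ∈ Fintype.piFinset fun _ : Fin d => Finset.range (kb N),
      HN d (A ∩ ↑(Δ N j)) N κ) ≤ HN d A N κ := fun N =>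
    blocksum_le A κ N (p N) (q N) (kb N) (hq N) (Δ N) (hΔ N)
  have hnonneg : ∀ N, 0 ≤ (∑ j ∈ Fintype.piFinset fun _ : Fin d => Finset.range (kb N),
      HN d (A ∩ ↑(Δ N j)) N κ) := fun N =>
    Finset.sum_nonneg fun j _ => HN_nonneg d _ N κ
  refine ⟨fun N => ⟨hnonneg N, (hle N).trans (HN_le_one d A N κ)⟩, ?_⟩
  have hrr := rr_tendsto p q kb hp hq hqtop hqp hpN hkb (supNormZ κ)
  -- eventually 2 * supNormZ κ ≤ p N
  have hppos : ∀ N, (0:ℝ) < p N := fun N => by exact_mod_cast hp N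
  have hqlep : ∀ᶠ N in atTop, (q N : ℝ) ≤ (p N : ℝ) := by
    filter_upwards [hqp.eventually (gt_mem_nhds (by norm_num : (0:ℝ) < 1))] with N hN
    have := (div_lt_one (hppos N)).mp hN
    linarith
  have hptop : Tendsto (fun N => (p N : ℝ)) atTop atTop :=
    tendsto_atTop_mono' atTop hqlep hqtop
  have hMev : ∀ᶠ N in atTop, 2 * supNormZ κ ≤ p N := by
    filter_upwards [hptop.eventually_ge_atTop (2 * supNormZ κ : ℝ)] with N hN
    exact_mod_cast hN
  have hlow : ∀ᶠ N in atTop,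
      HN d A N κ - (1 - ((kb N : ℝ) * ((p N : ℝ) + 1 - 2 * supNormZ κ) / (2 * N + 1)) ^ d)
        ≤ (∑ j ∈ Fintype.piFinset fun _ : Fin d => Finset.range (kb N),
            HN d (A ∩ ↑(Δ N j)) N κ) := by
    filter_upwards [hMev] with N hN
    have hb := blocksum_lower A κ N (p N) (q N) (kb N) (hq N) (hkmul N) hN (Δ N) (hΔ N)
    have hpow : ((kb N : ℝ) * ((p N : ℝ) + 1 - 2 * supNormZ κ) / (2 * (N:ℝ) + 1)) ^ d
        = ((kb N : ℝ) * ((p N : ℝ) + 1 - 2 * supNormZ κ)) ^ d / (2 * (N:ℝ) + 1) ^ d :=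
      div_pow _ _ d
    rw [hpow]
    linarith
  have hup : ∀ᶠ N in atTop, (∑ j ∈ Fintype.piFinset fun _ : Fin d => Finset.range (kb N),
      HN d (A ∩ ↑(Δ N j)) N κ) ≤ HN d A N κ := Eventually.of_forall hle
  refine tendsto_of_tendsto_of_tendsto_of_le_of_le' ?_ (hA κ).1 hlow hup
  have h2 : Tendsto (fun N => 1 -
      ((kb N : ℝ) * ((p N : ℝ) + 1 - 2 * supNormZ κ) / (2 * N + 1)) ^ d) atTop (nhds 0) := by
    have := (tendsto_const_nhds (x := (1:ℝ))).sub (hrr.pow d)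
    simpa using this
  have := ((hA κ).1).sub h2
  simpa using this
end

section
/- Let X = (X_n)_{n∈ℤ^d} be a strictly stationary, centered, m-dependent random field with E[X_0²] < ∞, and for J > 0 set Y^J_n = X_n − X^J_n, where X^J is the truncation of X at level J. Then for every B ⊆ ℤ^d and N ∈ ℕ, E[(S_N(B,X) − S_N(B,X^J))²] ≤ b(J)·card(B_N)/(2N+1)^d, where b(J) = Σ_{k∈ℤ^d, ‖k‖≤m} |E[Y^J_0 Y^J_k]|, and b(J) → 0 as J → ∞. -/
open MeasureTheory ProbabilityTheory Filter
open scoped ENNReal NNReal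

set_option linter.unusedSectionVars false
set_option maxHeartbeats 1000000

section MdepAux
variable {Ω : Type*} [MeasureSpace Ω] [IsProbabilityMeasure (ℙ : Measure Ω)]
  {d : ℕ} {X : (Fin d → ℤ) → Ω → ℝ}

private lemma stat_int (hmeas : ∀ n, Measurable (X n)) (hstat : StrictStat X)
    (ψ : ((Fin d → ℤ) → ℝ) → ℝ) (hψ : Measurable ψ) (k : Fin d → ℤ) :
    ∫ ω, ψ (fun n => X (n + k) ω) = ∫ ω, ψ (fun n => X n ω) := by
  have h1 : Measurable (fun ω (n : Fin d → ℤ) => X (n + k) ω) :=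
    measurable_pi_lambda _ (fun n => hmeas (n + k))
  have h2 : Measurable (fun ω (n : Fin d → ℤ) => X n ω) :=
    measurable_pi_lambda _ (fun n => hmeas n)
  calc ∫ ω, ψ (fun n => X (n + k) ω)
      = ∫ y, ψ y ∂(Measure.map (fun ω (n : Fin d → ℤ) => X (n + k) ω) ℙ) :=
        (integral_map h1.aemeasurable hψ.aestronglyMeasurable).symm
    _ = ∫ y, ψ y ∂(Measure.map (fun ω (n : Fin d → ℤ) => X n ω) ℙ) := by rw [hstat k]
    _ = ∫ ω, ψ (fun n => X n ω) := integral_map h2.aemeasurable hψ.aestronglyMeasurable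

private lemma measurable_trc (J : ℝ) : Measurable (fun t : ℝ => if |t| ≤ J then t else 0) :=
  Measurable.ite (measurableSet_le measurable_id.abs measurable_const) measurable_id
    measurable_const

private lemma c_const (hmeas : ∀ n, Measurable (X n)) (hstat : StrictStat X) (J : ℝ)
    (n : Fin d → ℤ) :
    ∫ ω, (if |X n ω| ≤ J then X n ω else 0) = ∫ ω, (if |X 0 ω| ≤ J then X 0 ω else 0) := by
  have hψ : Measurable (fun y : (Fin d → ℤ) → ℝ => if |y 0| ≤ J then y 0 else 0) :=
    (measurable_trc J).comp (measurable_pi_apply 0)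
  have := stat_int hmeas hstat _ hψ n
  simpa using this

private lemma Y_eq (hmeas : ∀ n, Measurable (X n)) (hstat : StrictStat X) (J : ℝ)
    (n : Fin d → ℤ) (ω : Ω) :
    X n ω - truncF X J n ω
      = (if |X n ω| ≤ J then 0 else X n ω) + ∫ ω', (if |X 0 ω'| ≤ J then X 0 ω' else 0) := by
  unfold truncF
  rw [c_const hmeas hstat J n]
  by_cases h : |X n ω| ≤ J <;> simp [h]

private lemma trc_mem (hmeas : ∀ n, Measurable (X n)) (hL2 : ∀ n, MemLp (X n) 2 ℙ) (J : ℝ)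
    (n : Fin d → ℤ) :
    MemLp (fun ω => if |X n ω| ≤ J then X n ω else 0) 2 ℙ := by
  refine MemLp.of_le (hL2 n) ((measurable_trc J).comp (hmeas n)).aestronglyMeasurable ?_
  filter_upwards with ω
  by_cases h : |X n ω| ≤ J <;> simp [h, Real.norm_eq_abs, abs_nonneg]

private lemma Y_mem (hmeas : ∀ n, Measurable (X n)) (hL2 : ∀ n, MemLp (X n) 2 ℙ) (J : ℝ)
    (n : Fin d → ℤ) :
    MemLp (fun ω => X n ω - truncF X J n ω) 2 ℙ := by
  have : MemLp (truncF X J n) 2 ℙ := by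
    unfold truncF
    exact (trc_mem hmeas hL2 J n).sub (memLp_const _)
  exact (hL2 n).sub this

private lemma trc_int (hmeas : ∀ n, Measurable (X n)) (hL2 : ∀ n, MemLp (X n) 2 ℙ) (J : ℝ)
    (n : Fin d → ℤ) :
    Integrable (fun ω => if |X n ω| ≤ J then X n ω else 0) ℙ :=
  (trc_mem hmeas hL2 J n).integrable one_le_two

private lemma EY (hmeas : ∀ n, Measurable (X n)) (hcent : ∀ n, ∫ ω, X n ω = 0)
    (hL2 : ∀ n, MemLp (X n) 2 ℙ) (J : ℝ) (n : Fin d → ℤ) :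
    ∫ ω, (X n ω - truncF X J n ω) = 0 := by
  have htr : Integrable (truncF X J n) ℙ := by
    unfold truncF
    exact (trc_int hmeas hL2 J n).sub (integrable_const _)
  have h1 : ∫ ω, truncF X J n ω = 0 := by
    unfold truncF
    rw [integral_sub (trc_int hmeas hL2 J n) (integrable_const _), integral_const]
    simp
  rw [integral_sub ((hL2 n).integrable one_le_two) htr, hcent n, h1, sub_zero]

private lemma measurable_g (J c : ℝ) :
    Measurable (fun t : ℝ => (if |t| ≤ J then 0 else t) + c) :=
  (Measurable.ite (measurableSet_le measurable_id.abs measurable_const) measurable_const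
    measurable_id).add_const c

private lemma cov_shift (hmeas : ∀ n, Measurable (X n)) (hstat : StrictStat X) (J : ℝ)
    (a b : Fin d → ℤ) :
    ∫ ω, (X a ω - truncF X J a ω) * (X b ω - truncF X J b ω)
      = ∫ ω, (X 0 ω - truncF X J 0 ω) * (X (b - a) ω - truncF X J (b - a) ω) := by
  set c : ℝ := ∫ ω', if |X 0 ω'| ≤ J then X 0 ω' else 0 with hc
  set g : ℝ → ℝ := fun t => (if |t| ≤ J then 0 else t) + c with hg
  have hY : ∀ n ω, X n ω - truncF X J n ω = g (X n ω) := fun n ω => Y_eq hmeas hstat J n ω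
  have hψ : Measurable (fun y : (Fin d → ℤ) → ℝ => g (y 0) * g (y (b - a))) :=
    ((measurable_g J c).comp (measurable_pi_apply 0)).mul
      ((measurable_g J c).comp (measurable_pi_apply (b - a)))
  have h := stat_int hmeas hstat _ hψ a
  simp only [zero_add, sub_add_cancel] at h
  simp only [hY]
  exact h

private lemma cov_zero (hmeas : ∀ n, Measurable (X n)) (hstat : StrictStat X)
    (hcent : ∀ n, ∫ ω, X n ω = 0) (hL2 : ∀ n, MemLp (X n) 2 ℙ) {m : ℕ}
    (hmdep : MDep m X) (J : ℝ) {a b : Fin d → ℤ}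
    (hab : (m : ℝ) < (supNormZ (a - b) : ℝ)) :
    ∫ ω, (X a ω - truncF X J a ω) * (X b ω - truncF X J b ω) = 0 := by
  set c : ℝ := ∫ ω', if |X 0 ω'| ≤ J then X 0 ω' else 0 with hc
  set g : ℝ → ℝ := fun t => (if |t| ≤ J then 0 else t) + c with hg
  have hY : ∀ n ω, X n ω - truncF X J n ω = g (X n ω) := fun n ω => Y_eq hmeas hstat J n ω
  have hind := hmdep {a} {b} (by
    intro s hs t ht
    simp only [Finset.mem_singleton] at hs ht
    subst hs; subst ht; exact hab)
  have haa : a ∈ ({a} : Finset (Fin d → ℤ)) := Finset.mem_singleton_self a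
  have hbb : b ∈ ({b} : Finset (Fin d → ℤ)) := Finset.mem_singleton_self b
  have hφa : Measurable (fun v : (({a} : Finset (Fin d → ℤ)) → ℝ) => g (v ⟨a, haa⟩)) :=
    (measurable_g J c).comp (measurable_pi_apply _)
  have hφb : Measurable (fun v : (({b} : Finset (Fin d → ℤ)) → ℝ) => g (v ⟨b, hbb⟩)) :=
    (measurable_g J c).comp (measurable_pi_apply _)
  have hind2 := hind.comp hφa hφb
  have hYa : ((fun v : (({a} : Finset (Fin d → ℤ)) → ℝ) => g (v ⟨a, haa⟩)) ∘
      (fun ω (s : ({a} : Finset (Fin d → ℤ))) => X s.1 ω)) = fun ω => X a ω - truncF X J a ω := by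
    funext ω; simp [Function.comp, hY]
  have hYb : ((fun v : (({b} : Finset (Fin d → ℤ)) → ℝ) => g (v ⟨b, hbb⟩)) ∘
      (fun ω (t : ({b} : Finset (Fin d → ℤ))) => X t.1 ω)) = fun ω => X b ω - truncF X J b ω := by
    funext ω; simp [Function.comp, hY]
  rw [hYa, hYb] at hind2
  have hma : AEStronglyMeasurable (fun ω => X a ω - truncF X J a ω) ℙ :=
    ((measurable_g J c).comp (hmeas a)).aestronglyMeasurable.congr (by
      filter_upwards with ω using (hY a ω).symm)
  have hmb : AEStronglyMeasurable (fun ω => X b ω - truncF X J b ω) ℙ :=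
    ((measurable_g J c).comp (hmeas b)).aestronglyMeasurable.congr (by
      filter_upwards with ω using (hY b ω).symm)
  have hmul := hind2.integral_fun_mul_eq_mul_integral hma hmb
  calc ∫ ω, (X a ω - truncF X J a ω) * (X b ω - truncF X J b ω)
      = (∫ ω, (X a ω - truncF X J a ω)) * ∫ ω, (X b ω - truncF X J b ω) := hmul
    _ = 0 := by rw [EY hmeas hcent hL2 J a, EY hmeas hcent hL2 J b, mul_zero]

private lemma amgm (x y : ℝ) : |x * y| ≤ (x ^ 2 + y ^ 2) / 2 := by
  rw [abs_mul]
  nlinarith [sq_nonneg (|x| - |y|), sq_abs x, sq_abs y, abs_nonneg x, abs_nonneg y]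

private lemma prod_int (hmeas : ∀ n, Measurable (X n)) (hL2 : ∀ n, MemLp (X n) 2 ℙ)
    (J : ℝ) (a b : Fin d → ℤ) :
    Integrable (fun ω => (X a ω - truncF X J a ω) * (X b ω - truncF X J b ω)) ℙ := by
  refine Integrable.mono'
    ((((Y_mem hmeas hL2 J a).integrable_sq).add ((Y_mem hmeas hL2 J b).integrable_sq)).div_const 2)
    (((Y_mem hmeas hL2 J a).aestronglyMeasurable).mul
      ((Y_mem hmeas hL2 J b).aestronglyMeasurable)) ?_
  filter_upwards with ω
  rw [Real.norm_eq_abs]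
  exact amgm _ _

end MdepAux

/-- **`L²` truncation bound for `m`-dependent stationary fields.** -/
theorem mdep_truncation_L2_bound
    {Ω : Type*} [MeasureSpace Ω] [IsProbabilityMeasure (ℙ : Measure Ω)]
    {d : ℕ} (m : ℕ) (X : (Fin d → ℤ) → Ω → ℝ)
    (hmeas : ∀ n, Measurable (X n))
    (hstat : StrictStat X)
    (hcent : ∀ n, ∫ ω, X n ω = 0)
    (hL2 : ∀ n, MemLp (X n) 2 ℙ)
    (hmdep : MDep m X)
    (b : ℝ → ℝ)
    (hbdef : ∀ J : ℝ, b J = ∑ k ∈ intCube d m,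
      |∫ ω, (X 0 ω - truncF X J 0 ω) * (X k ω - truncF X J k ω)|) :
    (∀ (B : Set (Fin d → ℤ)) (N : ℕ) (J : ℝ), 0 < J →
      ∫ ω, (SN d N B X ω - SN d N B (truncF X J) ω) ^ 2
        ≤ b J * (restr d B N).card / (2 * N + 1 : ℝ) ^ d) ∧
    Tendsto b atTop (nhds 0) := by
  classical
  constructor
  · -- Part 1: the L² bound
    intro B N J _hJ
    set Y : (Fin d → ℤ) → Ω → ℝ := fun n ω => X n ω - truncF X J n ω with hYdef
    set s := restr d B N with hs
    set r : (Fin d → ℤ) → ℝ := fun k => ∫ ω, Y 0 ω * Y k ω with hr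
    have hcpow : (0:ℝ) < (2 * (N:ℝ) + 1) ^ d := by positivity
    have hsqrt : (Real.sqrt ((2 * (N:ℝ) + 1) ^ d))⁻¹ ^ 2 = ((2 * (N:ℝ) + 1) ^ d)⁻¹ := by
      rw [inv_pow, Real.sq_sqrt hcpow.le]
    have hpt : ∀ ω, (SN d N B X ω - SN d N B (truncF X J) ω) ^ 2
        = ((2 * (N:ℝ) + 1) ^ d)⁻¹ * (∑ n ∈ s, Y n ω) ^ 2 := by
      intro ω
      simp only [SN, hYdef, ← hs]
      rw [← mul_sub, ← Finset.sum_sub_distrib, mul_pow, hsqrt]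
    have hint_prod : ∀ a b : Fin d → ℤ, Integrable (fun ω => Y a ω * Y b ω) ℙ :=
      fun a b => prod_int hmeas hL2 J a b
    have hsum_sq : ∫ ω, (∑ n ∈ s, Y n ω) ^ 2 = ∑ n ∈ s, ∑ n' ∈ s, ∫ ω, Y n ω * Y n' ω := by
      have h1 : ∀ ω, (∑ n ∈ s, Y n ω) ^ 2 = ∑ n ∈ s, ∑ n' ∈ s, Y n ω * Y n' ω := by
        intro ω; rw [sq, Finset.sum_mul_sum]
      simp_rw [h1]
      rw [integral_finset_sum s (fun n _ => integrable_finset_sum s (fun n' _ => hint_prod n n'))]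
      exact Finset.sum_congr rfl fun n _ => integral_finset_sum s (fun n' _ => hint_prod n n')
    have hinner : ∀ n ∈ s, ∑ n' ∈ s, ∫ ω, Y n ω * Y n' ω ≤ b J := by
      intro n _
      have hre : ∀ n', ∫ ω, Y n ω * Y n' ω = r (n' - n) := fun n' => cov_shift hmeas hstat J n n'
      calc ∑ n' ∈ s, ∫ ω, Y n ω * Y n' ω
          = ∑ n' ∈ s, r (n' - n) := Finset.sum_congr rfl fun n' _ => hre n'
        _ = ∑ n' ∈ s.filter (fun n' => supNormZ (n' - n) ≤ m), r (n' - n) := by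
            refine (Finset.sum_filter_of_ne ?_).symm
            intro n' _ hne
            by_contra hgt
            push_neg at hgt
            refine hne ?_
            have hsn : supNormZ ((0 : Fin d → ℤ) - (n' - n)) = supNormZ (n' - n) := by
              simp only [supNormZ, zero_sub, Pi.neg_apply, Int.natAbs_neg]
            exact cov_zero hmeas hstat hcent hL2 hmdep J (by rw [hsn]; exact_mod_cast hgt)
        _ ≤ ∑ n' ∈ s.filter (fun n' => supNormZ (n' - n) ≤ m), |r (n' - n)| :=
            Finset.sum_le_sum fun _ _ => le_abs_self _
        _ = ∑ k ∈ (s.filter (fun n' => supNormZ (n' - n) ≤ m)).image (fun n' => n' - n), |r k| := by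
            rw [Finset.sum_image (fun x _ y _ h => by simpa using sub_left_injective h)]
        _ ≤ ∑ k ∈ intCube d m, |r k| := by
            refine Finset.sum_le_sum_of_subset_of_nonneg ?_ (fun _ _ _ => abs_nonneg _)
            intro k hk
            simp only [Finset.mem_image, Finset.mem_filter] at hk
            obtain ⟨n', ⟨_, hn'⟩, rfl⟩ := hk
            simp only [intCube, Fintype.mem_piFinset, Finset.mem_Icc]
            intro i
            have hi : ((n' - n) i).natAbs ≤ m :=
              le_trans (Finset.le_sup (f := fun i => ((n' - n) i).natAbs) (Finset.mem_univ i)) hn'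
            simp only [Pi.sub_apply] at hi ⊢
            omega
        _ = b J := (hbdef J).symm
    have hsum_le : ∫ ω, (∑ n ∈ s, Y n ω) ^ 2 ≤ s.card * b J := by
      rw [hsum_sq]
      calc ∑ n ∈ s, ∑ n' ∈ s, ∫ ω, Y n ω * Y n' ω ≤ ∑ _n ∈ s, b J := Finset.sum_le_sum hinner
        _ = s.card * b J := by rw [Finset.sum_const, nsmul_eq_mul]
    calc ∫ ω, (SN d N B X ω - SN d N B (truncF X J) ω) ^ 2
        = ((2 * (N:ℝ) + 1) ^ d)⁻¹ * ∫ ω, (∑ n ∈ s, Y n ω) ^ 2 := by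
          simp_rw [hpt]; exact integral_const_mul _ _
      _ ≤ ((2 * (N:ℝ) + 1) ^ d)⁻¹ * (s.card * b J) :=
          mul_le_mul_of_nonneg_left hsum_le (by positivity)
      _ = b J * s.card / (2 * (N:ℝ) + 1) ^ d := by field_simp
  · -- Part 2: b(J) → 0
    set tail : ℝ → ℝ := fun J => ∫ ω, (if |X 0 ω| ≤ J then 0 else X 0 ω) ^ 2 with htail_def
    have hUmem : ∀ J : ℝ, MemLp (fun ω => if |X 0 ω| ≤ J then 0 else X 0 ω) 2 ℙ := by
      intro J
      refine MemLp.of_le (hL2 0) ?_ ?_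
      · exact (Measurable.ite (measurableSet_le (hmeas 0).abs measurable_const)
          measurable_const (hmeas 0)).aestronglyMeasurable
      · filter_upwards with ω
        by_cases h : |X 0 ω| ≤ J <;> simp [h, Real.norm_eq_abs]
    have key : ∀ J : ℝ, b J ≤ (intCube d m).card * tail J := by
      intro J
      set U : Ω → ℝ := fun ω => if |X 0 ω| ≤ J then 0 else X 0 ω with hU
      set c : ℝ := ∫ ω', if |X 0 ω'| ≤ J then X 0 ω' else 0 with hc
      have hUint : Integrable U ℙ := (hUmem J).integrable one_le_two
      have hU2 : Integrable (fun ω => U ω ^ 2) ℙ := (hUmem J).integrable_sq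
      have hEU : ∫ ω, U ω = -c := by
        have hXi : Integrable (X 0) ℙ := (hL2 0).integrable one_le_two
        have hUe : ∀ ω, U ω = X 0 ω - (if |X 0 ω| ≤ J then X 0 ω else 0) := by
          intro ω; by_cases h : |X 0 ω| ≤ J <;> simp [hU, h]
        calc ∫ ω, U ω = ∫ ω, (X 0 ω - (if |X 0 ω| ≤ J then X 0 ω else 0)) := by simp_rw [hUe]
          _ = (∫ ω, X 0 ω) - ∫ ω, (if |X 0 ω| ≤ J then X 0 ω else 0) :=
              integral_sub hXi (trc_int hmeas hL2 J 0)
          _ = -c := by rw [hcent 0, hc, zero_sub]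
      have hY0 : ∀ ω, X 0 ω - truncF X J 0 ω = U ω + c := fun ω => Y_eq hmeas hstat J 0 ω
      have hEY2 : ∫ ω, (X 0 ω - truncF X J 0 ω) ^ 2 ≤ tail J := by
        have hexp : ∀ ω, (X 0 ω - truncF X J 0 ω) ^ 2 = U ω ^ 2 + ((2 * c) * U ω + c ^ 2) := by
          intro ω; rw [hY0]; ring
        have hA : Integrable (fun ω => (2 * c) * U ω) ℙ := hUint.const_mul _
        have hB : Integrable (fun ω => (2 * c) * U ω + c ^ 2) ℙ := by
          exact hA.add (integrable_const _)
        have h2 : ∫ ω, (X 0 ω - truncF X J 0 ω) ^ 2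
            = tail J + ((2 * c) * (-c) + c ^ 2) := by
          simp_rw [hexp]
          rw [integral_add hU2 hB, integral_add hA (integrable_const _),
            integral_const_mul, hEU, integral_const]
          simp [htail_def, hU]
        rw [h2]; nlinarith [sq_nonneg c]
      have hterm : ∀ k : Fin d → ℤ,
          |∫ ω, (X 0 ω - truncF X J 0 ω) * (X k ω - truncF X J k ω)| ≤ tail J := by
        intro k
        set Y : (Fin d → ℤ) → Ω → ℝ := fun n ω => X n ω - truncF X J n ω with hYd
        have hsqint : ∀ n, Integrable (fun ω => Y n ω ^ 2) ℙ :=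
          fun n => (Y_mem hmeas hL2 J n).integrable_sq
        have h4 : ∫ ω, Y k ω ^ 2 = ∫ ω, Y 0 ω ^ 2 := by
          have := cov_shift hmeas hstat J k k
          simp only [sub_self] at this
          simpa [sq] using this
        have h1 : |∫ ω, Y 0 ω * Y k ω| ≤ ∫ ω, |Y 0 ω * Y k ω| := by
          have := norm_integral_le_integral_norm (μ := (ℙ : Measure Ω)) (fun ω => Y 0 ω * Y k ω)
          simp only [Real.norm_eq_abs] at this
          exact this
        have h2 : ∫ ω, |Y 0 ω * Y k ω| ≤ ∫ ω, (Y 0 ω ^ 2 + Y k ω ^ 2) / 2 := by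
          refine integral_mono (prod_int hmeas hL2 J 0 k).abs
            (((hsqint 0).add (hsqint k)).div_const 2) ?_
          intro ω; exact amgm _ _
        have h3 : ∫ ω, (Y 0 ω ^ 2 + Y k ω ^ 2) / 2 = ∫ ω, Y 0 ω ^ 2 := by
          rw [integral_div, integral_add (hsqint 0) (hsqint k), h4]; ring
        calc |∫ ω, Y 0 ω * Y k ω| ≤ ∫ ω, (Y 0 ω ^ 2 + Y k ω ^ 2) / 2 := le_trans h1 h2
          _ = ∫ ω, Y 0 ω ^ 2 := h3
          _ ≤ tail J := hEY2
      calc b J = ∑ k ∈ intCube d m,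
            |∫ ω, (X 0 ω - truncF X J 0 ω) * (X k ω - truncF X J k ω)| := hbdef J
        _ ≤ ∑ _k ∈ intCube d m, tail J := Finset.sum_le_sum fun k _ => hterm k
        _ = (intCube d m).card * tail J := by rw [Finset.sum_const, nsmul_eq_mul]
    have htail : Tendsto tail atTop (nhds 0) := by
      have h := tendsto_integral_filter_of_dominated_convergence (μ := (ℙ : Measure Ω))
        (l := (atTop : Filter ℝ))
        (F := fun J ω => (if |X 0 ω| ≤ J then 0 else X 0 ω) ^ 2) (f := fun _ => (0:ℝ))
        (bound := fun ω => X 0 ω ^ 2)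
        (Filter.Eventually.of_forall fun J =>
          ((Measurable.ite (measurableSet_le (hmeas 0).abs measurable_const)
            measurable_const (hmeas 0)).pow_const 2).aestronglyMeasurable)
        (Filter.Eventually.of_forall fun J => Filter.Eventually.of_forall fun ω => by
          rw [Real.norm_eq_abs, abs_of_nonneg (sq_nonneg _)]
          by_cases h : |X 0 ω| ≤ J
          · simp [h, sq_nonneg]
          · simp [h])
        ((hL2 0).integrable_sq)
        (Filter.Eventually.of_forall fun ω => by
          refine Tendsto.congr' ?_ tendsto_const_nhds
          filter_upwards [eventually_ge_atTop |X 0 ω|] with J hJ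
          simp [hJ])
      have h0 : (∫ (_ : Ω), (0:ℝ)) = 0 := integral_zero _ _
      rw [h0] at h
      exact h
    have hb0 : ∀ J, 0 ≤ b J := fun J => by
      rw [hbdef J]; positivity
    have hmul : Tendsto (fun t => ((intCube d m).card : ℝ) * tail t) atTop (nhds 0) := by
      have h2 := htail.const_mul ((intCube d m).card : ℝ)
      rw [mul_zero] at h2
      exact h2
    exact squeeze_zero hb0 key hmul
end
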